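/- Let L be a restricted Lie algebra over a field of characteristic p > 0. Then the derived-ideal identity L'_p·u(L) = [ω(L), ω(L)]·u(L) holds, where L'_p is the restricted subalgebra of L generated by the derived subalgebra L' and [ω(L), ω(L)] is the span of commutators ab − ba with a, b ∈ ω(L). -/

import Mathlib

open UniversalEnvelopingAlgebra
open scoped TensorProduct

/-! Infrastructure: restricted Lie algebras and their restricted enveloping algebras
(not yet in Mathlib). -/

section Restricted

attribute [local instance 100] LieRing.ofAssociativeRing

variable (F : Type*) [Field F] (p : ℕ) (L : Type*) [LieRing L] [LieAlgebra F L]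

/-- The element `ad(λ·x + y)^{p-1}(x)` of `F[λ] ⊗ L`, whose `λ^{i-1}`-coefficient is
`i·sᵢ(x,y)`. -/
noncomputable def adLambdaPow (x y : L) : Polynomial F ⊗[F] L :=
  ((LieAlgebra.ad (Polynomial F) (Polynomial F ⊗[F] L)
      (Polynomial.X ⊗ₜ[F] x + 1 ⊗ₜ[F] y)) ^ (p - 1)) (1 ⊗ₜ[F] x)

/-- Extraction of the coefficient of `λ^i` from an element of `F[λ] ⊗ L`. -/
noncomputable def lamCoeff (i : ℕ) : Polynomial F ⊗[F] L →ₗ[F] L :=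
  (TensorProduct.lid F L).toLinearMap ∘ₗ LinearMap.rTensor L (Polynomial.lcoeff F i)

/-- The element `sᵢ(x,y)`, defined by: `i·sᵢ(x,y)` is the coefficient of `λ^{i-1}` in
`ad(λ·x + y)^{p-1}(x)`. -/
noncomputable def sElt (i : ℕ) (x y : L) : L :=
  ((i : F)⁻¹) • lamCoeff F L (i - 1) (adLambdaPow F p L x y)

/-- A `[p]`-mapping on the Lie algebra `L`, making `(L, [p])` a restricted Lie algebra:
(1) `ad(x^{[p]}) = (ad x)^p`; (2) `(α·x)^{[p]} = α^p·x^{[p]}`;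
(3) `(x+y)^{[p]} = x^{[p]} + y^{[p]} + Σ_{i=1}^{p-1} sᵢ(x,y)`. -/
structure PMapOn where
  toFun : L → L
  ad_pow : ∀ x : L, LieAlgebra.ad F L (toFun x) = (LieAlgebra.ad F L x) ^ p
  smul_pow : ∀ (a : F) (x : L), toFun (a • x) = a ^ p • toFun x
  add_pow : ∀ x y : L, toFun (x + y) =
    toFun x + toFun y + ∑ i ∈ Finset.Icc 1 (p - 1), sElt F p L i x y

variable {F p L} (pm : PMapOn F p L)

/-- The relation `x^{[p]} ∼ x^p` on `U(L)` whose quotient is the restricted enveloping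
algebra `u(L)`. -/
def uRel (a b : UniversalEnvelopingAlgebra F L) : Prop :=
  ∃ x : L, a = ι F (pm.toFun x) ∧ b = (ι F x) ^ p

/-- The restricted enveloping algebra `u(L) = U(L)/(x^{[p]} - x^p)`. -/
def uEnv := RingQuot (uRel pm)

noncomputable instance : Ring (uEnv pm) := inferInstanceAs (Ring (RingQuot (uRel pm)))
noncomputable instance : Algebra F (uEnv pm) :=
  inferInstanceAs (Algebra F (RingQuot (uRel pm)))

/-- The canonical map `L → u(L)` (injective by Jacobson's PBW theorem). -/
noncomputable def uIota : L →ₗ[F] uEnv pm :=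
  (RingQuot.mkAlgHom F (uRel pm)).toLinearMap ∘ₗ (ι F : L →ₗ⁅F⁆ _).toLinearMap

/-- The augmentation map `u(L) → F`. -/
noncomputable def uAug (hp : p ≠ 0) : uEnv pm →ₐ[F] F :=
  RingQuot.liftAlgHom F
    ⟨UniversalEnvelopingAlgebra.lift F (0 : L →ₗ⁅F⁆ F), by
      rintro a b ⟨x, rfl, rfl⟩
      simp [UniversalEnvelopingAlgebra.lift_ι_apply, zero_pow hp]⟩

/-- The augmentation ideal `ω(L)` of `u(L)`. -/
noncomputable def uAugIdeal (hp : p ≠ 0) : Submodule F (uEnv pm) :=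
  LinearMap.ker (uAug pm hp).toLinearMap

/-- The `n`-th dimension subalgebra `D_n(L) = L ∩ ω(L)^n`. -/
noncomputable def dimSubalgebra (hp : p ≠ 0) (n : ℕ) : Submodule F L :=
  Submodule.comap (uIota pm) (uAugIdeal pm hp ^ n)

/-- The restricted subalgebra of `L` generated by a subset `X`: the smallest `F`-submodule
containing `X` that is closed under the Lie bracket and under the `p`-map. -/
def restrictedSpan (X : Set L) : Submodule F L :=
  sInf {S : Submodule F L | X ⊆ S ∧ (∀ a ∈ S, ∀ b ∈ S, ⁅a, b⁆ ∈ S) ∧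
    ∀ a ∈ S, pm.toFun a ∈ S}

end Restricted


section Aux

attribute [local instance 100] LieRing.ofAssociativeRing

variable {F : Type*} [Field F] {p : ℕ} {L : Type*} [LieRing L] [LieAlgebra F L]
variable (pm : PMapOn F p L)

theorem uEnv_induction {motive : uEnv pm → Prop}
    (halg : ∀ r : F, motive (algebraMap F (uEnv pm) r))
    (hiota : ∀ x : L, motive (uIota pm x))
    (hmul : ∀ a b, motive a → motive b → motive (a * b))
    (hadd : ∀ a b, motive a → motive b → motive (a + b)) (a : uEnv pm) : motive a := by
  obtain ⟨b, rfl⟩ := RingQuot.mkAlgHom_surjective F (uRel pm) a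
  obtain ⟨c, rfl⟩ : ∃ c, UniversalEnvelopingAlgebra.mkAlgHom F L c = b :=
    RingCon.mkₐ_surjective (α := F) _ b
  induction c using TensorAlgebra.induction with
  | algebraMap r =>
    have h : (RingQuot.mkAlgHom F (uRel pm) (UniversalEnvelopingAlgebra.mkAlgHom F L
        (algebraMap F (TensorAlgebra F L) r)) : uEnv pm) = algebraMap F (uEnv pm) r :=
      ((RingQuot.mkAlgHom F (uRel pm)).comp (UniversalEnvelopingAlgebra.mkAlgHom F L)).commutes r
    exact (congrArg motive h).mpr (halg r)
  | ι x => exact hiota x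
  | mul a b ha hb => rw [map_mul, map_mul]; exact hmul _ _ ha hb
  | add a b ha hb => rw [map_add, map_add]; exact hadd _ _ ha hb

theorem uIota_pmap (x : L) : uIota pm (pm.toFun x) = (uIota pm x) ^ p := by
  have h := RingQuot.mkAlgHom_rel F (show uRel pm (ι F (pm.toFun x)) ((ι F x) ^ p) from
    ⟨x, rfl, rfl⟩)
  rw [map_pow] at h
  exact h

theorem uIota_bracket (x y : L) :
    uIota pm ⁅x, y⁆ = uIota pm x * uIota pm y - uIota pm y * uIota pm x := by
  show RingQuot.mkAlgHom F (uRel pm) ((ι F : L →ₗ⁅F⁆ _) ⁅x, y⁆) = _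
  rw [LieHom.map_lie, Ring.lie_def, map_sub, map_mul, map_mul]
  rfl

theorem uIota_mem_aug (hp : p ≠ 0) (x : L) : uIota pm x ∈ uAugIdeal pm hp := by
  show uAug pm hp (RingQuot.mkAlgHom F (uRel pm) ((ι F : L →ₗ⁅F⁆ _) x)) = 0
  erw [uAug, RingQuot.liftAlgHom_mkAlgHom_apply, UniversalEnvelopingAlgebra.lift_ι_apply]
  simp

end Aux

/-- `L'_p·u(L) = [ω(L), ω(L)]·u(L)`: the right ideal of `u(L)` generated by the
restricted subalgebra `L'_p` generated by the derived subalgebra `L' = [L,L]` coincides with the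
right ideal generated by all commutators of elements of the augmentation ideal `ω(L)`. -/
theorem derived_ideal_eq_commutator_ideal (F : Type*) [Field F] (p : ℕ) [Fact p.Prime]
    [CharP F p] (L : Type*) [LieRing L] [LieAlgebra F L] (pm : PMapOn F p L) :
    Submodule.span F {z : uEnv pm | ∃ s ∈ restrictedSpan pm {w : L | ∃ x y : L, w = ⁅x, y⁆},
        ∃ u : uEnv pm, z = uIota pm s * u} =
      Submodule.span F {z : uEnv pm |
        ∃ a ∈ uAugIdeal pm (Fact.out : p.Prime).ne_zero,
        ∃ b ∈ uAugIdeal pm (Fact.out : p.Prime).ne_zero,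
        ∃ u : uEnv pm, z = (a * b - b * a) * u} := by
  have hp : p ≠ 0 := (Fact.out : p.Prime).ne_zero
  set X : Set L := {w : L | ∃ x y : L, w = ⁅x, y⁆} with hX
  set I := Submodule.span F {z : uEnv pm | ∃ s ∈ restrictedSpan pm X,
      ∃ u : uEnv pm, z = uIota pm s * u} with hI
  set J := Submodule.span F {z : uEnv pm |
      ∃ a ∈ uAugIdeal pm hp, ∃ b ∈ uAugIdeal pm hp,
      ∃ u : uEnv pm, z = (a * b - b * a) * u} with hJ
  -- basic facts
  have hXmem : ∀ x y : L, (⁅x, y⁆ : L) ∈ restrictedSpan pm X := by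
    intro x y
    rw [restrictedSpan]
    exact Submodule.mem_sInf.2 fun S hS => hS.1 ⟨x, y, rfl⟩
  -- I is a right ideal
  have Irt : ∀ z ∈ I, ∀ v : uEnv pm, z * v ∈ I := by
    intro z hz v
    refine Submodule.span_induction (p := fun z _ => z * v ∈ I) ?_ ?_ ?_ ?_ hz
    · rintro _ ⟨s, hs, u, rfl⟩
      exact Submodule.subset_span ⟨s, hs, u * v, by rw [mul_assoc]⟩
    · simp
    · intro a b _ _ ha hb; rw [add_mul]; exact I.add_mem ha hb
    · intro r a _ ha; rw [smul_mul_assoc]; exact I.smul_mem r ha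
  -- I is a left ideal
  have Ilt : ∀ (c : uEnv pm), ∀ z ∈ I, c * z ∈ I := by
    have key : ∀ y : L, ∀ z ∈ I, uIota pm y * z ∈ I := by
      intro y z hz
      refine Submodule.span_induction (p := fun z _ => uIota pm y * z ∈ I) ?_ ?_ ?_ ?_ hz
      · rintro _ ⟨s, hs, u, rfl⟩
        have h : uIota pm y * (uIota pm s * u) =
            uIota pm s * (uIota pm y * u) + uIota pm ⁅y, s⁆ * u := by
          rw [uIota_bracket]; noncomm_ring
        rw [h]
        exact I.add_mem (Submodule.subset_span ⟨s, hs, _, rfl⟩)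
          (Submodule.subset_span ⟨⁅y, s⁆, hXmem y s, u, rfl⟩)
      · simp
      · intro a b _ _ ha hb; rw [mul_add]; exact I.add_mem ha hb
      · intro r a _ ha; rw [mul_smul_comm]; exact I.smul_mem r ha
    intro c
    induction c using uEnv_induction with
    | halg r => intro z hz; rw [← Algebra.smul_def]; exact I.smul_mem r hz
    | hiota x => exact key x
    | hmul a b ha hb => intro z hz; rw [mul_assoc]; exact ha _ (hb _ hz)
    | hadd a b ha hb => intro z hz; rw [add_mul]; exact I.add_mem (ha _ hz) (hb _ hz)
  -- all commutators lie in I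
  have comm_iota : ∀ (x : L) (b : uEnv pm), uIota pm x * b - b * uIota pm x ∈ I := by
    intro x b
    induction b using uEnv_induction with
    | halg r =>
      rw [Algebra.commutes]; simp
    | hiota y =>
      rw [← uIota_bracket]
      exact Submodule.subset_span ⟨⁅x, y⁆, hXmem x y, 1, by rw [mul_one]⟩
    | hmul a b ha hb =>
      have h : uIota pm x * (a * b) - a * b * uIota pm x =
          (uIota pm x * a - a * uIota pm x) * b +
            a * (uIota pm x * b - b * uIota pm x) := by noncomm_ring
      rw [h]
      exact I.add_mem (Irt _ ha b) (Ilt a _ hb)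
    | hadd a b ha hb =>
      have h : uIota pm x * (a + b) - (a + b) * uIota pm x =
          (uIota pm x * a - a * uIota pm x) + (uIota pm x * b - b * uIota pm x) := by
        noncomm_ring
      rw [h]; exact I.add_mem ha hb
  have comm : ∀ a b : uEnv pm, a * b - b * a ∈ I := by
    intro a
    induction a using uEnv_induction with
    | halg r => intro b; rw [Algebra.commutes]; simp
    | hiota x => exact comm_iota x
    | hmul a c ha hc =>
      intro b
      have h : a * c * b - b * (a * c) =
          a * (c * b - b * c) + (a * b - b * a) * c := by noncomm_ring
      rw [h]
      exact I.add_mem (Ilt a _ (hc b)) (Irt _ (ha b) c)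
    | hadd a c ha hc =>
      intro b
      have h : (a + c) * b - b * (a + c) = (a * b - b * a) + (c * b - b * c) := by
        noncomm_ring
      rw [h]; exact I.add_mem (ha b) (hc b)
  apply le_antisymm
  · -- I ≤ J
    rw [hI]
    apply Submodule.span_le.2
    rintro _ ⟨s, hs, u, rfl⟩
    -- the set of s for which ∀ u, ι s * u ∈ J is a restricted-closed submodule
    let S : Submodule F L :=
      { carrier := {s : L | ∀ u : uEnv pm, uIota pm s * u ∈ J}
        add_mem' := fun {a b} ha hb u => by
          rw [map_add, add_mul]; exact J.add_mem (ha u) (hb u)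
        zero_mem' := fun u => by rw [map_zero, zero_mul]; exact J.zero_mem
        smul_mem' := fun c a ha u => by
          rw [map_smul, smul_mul_assoc]; exact J.smul_mem c (ha u) }
    have hbr : ∀ x y : L, (⁅x, y⁆ : L) ∈ S := by
      intro x y u
      refine Submodule.subset_span ⟨uIota pm x, uIota_mem_aug pm hp x,
        uIota pm y, uIota_mem_aug pm hp y, u, ?_⟩
      rw [uIota_bracket]
    have hSle : restrictedSpan pm X ≤ S := by
      rw [restrictedSpan]
      refine sInf_le ⟨?_, ?_, ?_⟩
      · rintro _ ⟨x, y, rfl⟩; exact hbr x y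
      · intro a _ b _; exact hbr a b
      · intro a ha u
        have h2 : (uIota pm a) ^ p = uIota pm a * (uIota pm a) ^ (p - 1) := by
          rw [← pow_succ', Nat.sub_add_cancel (Nat.one_le_iff_ne_zero.2 hp)]
        rw [uIota_pmap, h2, mul_assoc]
        exact ha _
    exact hSle hs u
  · -- J ≤ I
    rw [hJ]
    apply Submodule.span_le.2
    rintro _ ⟨a, _, b, _, u, rfl⟩
    exact Irt _ (comm a b) u
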